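/- A G-MAPT satisfying the acyclicity constraint (Constraint 2) has an acyclic state space: no nonempty sequence of transition firings, resets, and time increases returns to a previously visited state. -/

import Mathlib

structure ATrans (Val Loc : Type) where
  src : Loc
  f : Val → Val
  lo : ℕ
  hi : ℕ
  dst : Loc

structure MState (n : ℕ) (Val Loc : Type) where
  loc : Fin n → Loc
  clock : Fin n → ℕ
  v : Val

structure GMAPT (n : ℕ) (Val Loc : Type) where
  trans : Fin n → Set (ATrans Val Loc)
  initLoc : Fin n → Loc
  finalLoc : Fin n → Loc
  period : Fin n → ℕ
  period_pos : ∀ i, 0 < period i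
  initState : MState n Val Loc


variable {n : ℕ} {Val Loc : Type}


/-- A transition `t` of agent `i` is enabled at state `s`. -/
def TransEnabled (M : GMAPT n Val Loc) (i : Fin n) (t : ATrans Val Loc)
    (s : MState n Val Loc) : Prop :=
  t ∈ M.trans i ∧ s.loc i = t.src ∧ t.lo ≤ s.clock i ∧ s.clock i ≤ t.hi

/-- Firing a transition updates the locality of agent `i` and the shared variable. -/
def fireTrans (i : Fin n) (t : ATrans Val Loc) (s : MState n Val Loc) : MState n Val Loc :=
  { loc := Function.update s.loc i t.dst, clock := s.clock, v := t.f s.v }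

/-- The reset of agent `i` is enabled at `s`. -/
def ResetEnabled (M : GMAPT n Val Loc) (i : Fin n) (s : MState n Val Loc) : Prop :=
  s.loc i = M.finalLoc i ∧ s.clock i = M.period i

/-- Firing a reset sends agent `i` back to its initial locality with clock 0. -/
def fireReset (M : GMAPT n Val Loc) (i : Fin n) (s : MState n Val Loc) : MState n Val Loc :=
  { loc := Function.update s.loc i (M.initLoc i),
    clock := Function.update s.clock i 0, v := s.v }

/-- Time may increase at `s`. -/
def TimeEnabled (M : GMAPT n Val Loc) (s : MState n Val Loc) : Prop :=
  ∀ i, (∃ t ∈ M.trans i, s.loc i = t.src ∧ s.clock i < t.hi) ∨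
    (s.loc i = M.finalLoc i ∧ s.clock i < M.period i)

/-- A unit time increase. -/
def tickState (s : MState n Val Loc) : MState n Val Loc :=
  { loc := s.loc, clock := fun i => s.clock i + 1, v := s.v }

/-- One step of the (original) semantics of a G-MAPT. -/
inductive Step (M : GMAPT n Val Loc) : MState n Val Loc → MState n Val Loc → Prop
  | trans (i : Fin n) (t : ATrans Val Loc) (s : MState n Val Loc) :
      TransEnabled M i t s → Step M s (fireTrans i t s)
  | reset (i : Fin n) (s : MState n Val Loc) :
      ResetEnabled M i s → Step M s (fireReset M i s)
  | time (s : MState n Val Loc) : TimeEnabled M s → Step M s (tickState s)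

/-- A state is reachable if some sequence of steps leads to it from the initial state. -/
def Reachable (M : GMAPT n Val Loc) (s : MState n Val Loc) : Prop :=
  Relation.ReflTransGen (Step M) M.initState s


/-- A path of transitions of agent `i` from a locality to another. -/
def AgentPath (M : GMAPT n Val Loc) (i : Fin n) :
    List (ATrans Val Loc) → Loc → Loc → Prop
  | [], l, l' => l = l'
  | t :: p, l, l' => t ∈ M.trans i ∧ t.src = l ∧ AgentPath M i p t.dst l'

/-- The transition graph of every agent is acyclic. -/
def AgentsAcyclic (M : GMAPT n Val Loc) : Prop :=
  ∀ i l p, p ≠ [] → ¬ AgentPath M i p l l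

/-- Constraint 2 (acyclicity): `Val = W × X`, some agent increases the `X`-component
  on every path from its initial to its final locality, and no function ever
  decreases the `X`-component. -/
def XGrowth {W X : Type} [LinearOrder X] (M : GMAPT n (W × X) Loc) : Prop :=
  (∃ i, ∀ p, AgentPath M i p (M.initLoc i) (M.finalLoc i) →
    ∃ t ∈ p, ∀ v : W × X, v.2 < (t.f v).2) ∧
  (∀ i, ∀ t ∈ M.trans i, ∀ v : W × X, v.2 ≤ (t.f v).2)


section AuxLemmas

variable {α : Type*} {β : Type*} [PartialOrder β]

private lemma rtg_mono {R : α → α → Prop} {m : α → β} (h : ∀ a b, R a b → m a ≤ m b) :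
    ∀ {a b}, Relation.ReflTransGen R a b → m a ≤ m b := by
  intro a b hab
  induction hab with
  | refl => exact le_refl _
  | tail _ hstep ih => exact le_trans ih (h _ _ hstep)

private lemma rtg_restrict {R : α → α → Prop} {m : α → β} (h : ∀ a b, R a b → m a ≤ m b)
    {a b} (hab : Relation.ReflTransGen R a b) :
    m b ≤ m a → Relation.ReflTransGen (fun x y => R x y ∧ m y = m x) a b := by
  induction hab using Relation.ReflTransGen.head_induction_on with
  | refl => exact fun _ => .refl
  | @head a' c hac hcb ih =>
    intro hba
    have h1 : m a' ≤ m c := h _ _ hac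
    have h2 : m c ≤ m b := rtg_mono h hcb
    have hca : m c = m a' := le_antisymm (le_trans h2 hba) h1
    exact .head ⟨hac, hca⟩ (ih (hca ▸ hba))

private lemma tg_restrict {R : α → α → Prop} {m : α → β} (h : ∀ a b, R a b → m a ≤ m b)
    {s : α} (hss : Relation.TransGen R s s) :
    Relation.TransGen (fun x y => R x y ∧ m y = m x) s s := by
  obtain ⟨c, hsc, hcs⟩ := Relation.TransGen.tail'_iff.mp hss
  have h1 : m s ≤ m c := rtg_mono h hsc
  have h2 : m c ≤ m s := h _ _ hcs
  exact Relation.TransGen.tail' (rtg_restrict h hsc h2) ⟨hcs, le_antisymm h1 h2⟩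

private lemma rtg_mono' {R : α → α → Prop} {m : α → β} (h : ∀ a b, R a b → m b ≤ m a) :
    ∀ {a b}, Relation.ReflTransGen R a b → m b ≤ m a := by
  intro a b hab
  induction hab with
  | refl => exact le_refl _
  | tail _ hstep ih => exact le_trans (h _ _ hstep) ih

private lemma rtg_restrict' {R : α → α → Prop} {m : α → β} (h : ∀ a b, R a b → m b ≤ m a)
    {a b} (hab : Relation.ReflTransGen R a b) :
    m a ≤ m b → Relation.ReflTransGen (fun x y => R x y ∧ m y = m x) a b := by
  induction hab using Relation.ReflTransGen.head_induction_on with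
  | refl => exact fun _ => .refl
  | @head a' c hac hcb ih =>
    intro hba
    have h1 : m c ≤ m a' := h _ _ hac
    have h2 : m b ≤ m c := rtg_mono' h hcb
    have hca : m c = m a' := le_antisymm h1 (le_trans hba h2)
    exact .head ⟨hac, hca⟩ (ih (hca ▸ hba))

private lemma tg_restrict' {R : α → α → Prop} {m : α → β} (h : ∀ a b, R a b → m b ≤ m a)
    {s : α} (hss : Relation.TransGen R s s) :
    Relation.TransGen (fun x y => R x y ∧ m y = m x) s s := by
  obtain ⟨c, hsc, hcs⟩ := Relation.TransGen.tail'_iff.mp hss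
  have h1 : m c ≤ m s := rtg_mono' h hsc
  have h2 : m s ≤ m c := h _ _ hcs
  exact Relation.TransGen.tail' (rtg_restrict' h hsc h2) ⟨hcs, le_antisymm h2 h1⟩

private lemma tg_split {R P : α → α → Prop} {a b : α} (hab : Relation.TransGen R a b) :
    Relation.TransGen (fun x y => R x y ∧ ¬ P x y) a b ∨
      ∃ u u', Relation.ReflTransGen R a u ∧ R u u' ∧ P u u' ∧ Relation.ReflTransGen R u' b := by
  induction hab using Relation.TransGen.head_induction_on with
  | @single a' h =>
    by_cases hp : P a' b
    · exact Or.inr ⟨a', b, .refl, h, hp, .refl⟩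
    · exact Or.inl (.single ⟨h, hp⟩)
  | @head a' c hac htg ih =>
    by_cases hp : P a' c
    · exact Or.inr ⟨a', c, .refl, hac, hp, htg.to_reflTransGen⟩
    · rcases ih with h | ⟨u, u', h1, h2, h3, h4⟩
      · exact Or.inl (h.head ⟨hac, hp⟩)
      · exact Or.inr ⟨u, u', h1.head hac, h2, h3, h4⟩

end AuxLemmas


/-- a G-MAPT satisfying the acyclicity constraint has an acyclic state
  space: no nonempty sequence of steps returns to a previously visited state. -/
theorem stmt3 {W X : Type} [LinearOrder X] (M : GMAPT n (W × X) Loc)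
    (hdag : AgentsAcyclic M) (hgrow : XGrowth M) :
    ∀ s, Reachable M s → ¬ Relation.TransGen (Step M) s s := by
  intro s _ hcyc
  obtain ⟨i0, hi0⟩ := hgrow.1
  have hmono : ∀ a b : MState n (W × X) Loc, Step M a b → (a.v).2 ≤ (b.v).2 := by
    intro a b hstep
    cases hstep with
    | trans i t s h => exact hgrow.2 i t h.1 _
    | reset i s h => exact le_refl _
    | time s h => exact le_refl _
  have hcyc1 := tg_restrict (m := fun st : MState n (W × X) Loc => (st.v).2) hmono hcyc
  -- any segment ending at the final locality of `i0` yields an agent path to it,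
  -- all of whose transitions are non-strict on the X-component
  have hpath : ∀ a b : MState n (W × X) Loc,
      Relation.ReflTransGen (fun x y => Step M x y ∧ (y.v).2 = (x.v).2) a b →
      b.loc i0 = M.finalLoc i0 →
      ∃ p, AgentPath M i0 p (a.loc i0) (M.finalLoc i0) ∧
        ∀ t ∈ p, ¬ ∀ v : W × X, v.2 < (t.f v).2 := by
    intro a b hab hb
    induction hab using Relation.ReflTransGen.head_induction_on with
    | refl => exact ⟨[], hb, by simp⟩
    | @head a' c hac hcb ih =>
      obtain ⟨hstep, hx⟩ := hac
      cases hstep with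
      | trans j t s hen =>
        by_cases hj : j = i0
        · subst hj
          obtain ⟨p, hp, hns⟩ := ih
          refine ⟨t :: p, ⟨hen.1, hen.2.1.symm, ?_⟩, ?_⟩
          · simpa [fireTrans] using hp
          · intro t' ht'
            rcases List.mem_cons.mp ht' with rfl | ht'
            · intro hstrict
              have hlt := hstrict a'.v
              have hx' : ((t'.f a'.v).2 : X) = (a'.v).2 := hx
              rw [hx'] at hlt
              exact lt_irrefl _ hlt
            · exact hns t' ht'
        · obtain ⟨p, hp, hns⟩ := ih
          refine ⟨p, ?_, hns⟩
          rwa [show (fireTrans j t a').loc i0 = a'.loc i0 from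
            Function.update_of_ne (Ne.symm hj) _ _] at hp
      | reset j s hen =>
        by_cases hj : j = i0
        · subst hj
          exact ⟨[], hen.1, by simp⟩
        · obtain ⟨p, hp, hns⟩ := ih
          refine ⟨p, ?_, hns⟩
          rwa [show (fireReset M j a').loc i0 = a'.loc i0 from
            Function.update_of_ne (Ne.symm hj) _ _] at hp
      | time s hen =>
        exact ih
  rcases tg_split (P := fun u u' => ResetEnabled M i0 u ∧ u' = fireReset M i0 u) hcyc1 with
    hnores | ⟨u, u', hsu, hstepuu, ⟨hre, hrw⟩, hus⟩
  · -- Case B : no reset of agent i0 occurs along the cycle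
    have hm2 : ∀ a b : MState n (W × X) Loc,
        ((Step M a b ∧ (b.v).2 = (a.v).2) ∧
          ¬ (ResetEnabled M i0 a ∧ b = fireReset M i0 a)) →
        a.clock i0 ≤ b.clock i0 := by
      rintro a b ⟨⟨hstep, -⟩, hnp⟩
      cases hstep with
      | trans j t s hen => exact le_refl _
      | reset j s hen =>
        by_cases hj : j = i0
        · subst hj; exact absurd ⟨hen, rfl⟩ hnp
        · exact le_of_eq (Function.update_of_ne (Ne.symm hj) _ _).symm
      | time s hen => exact Nat.le_succ _
    have hcyc3 := tg_restrict (m := fun st : MState n (W × X) Loc => st.clock i0) hm2 hnores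
    have hm3 : ∀ a b : MState n (W × X) Loc,
        (((Step M a b ∧ (b.v).2 = (a.v).2) ∧
          ¬ (ResetEnabled M i0 a ∧ b = fireReset M i0 a)) ∧ b.clock i0 = a.clock i0) →
        b.clock ≤ a.clock := by
      rintro a b ⟨⟨⟨hstep, -⟩, -⟩, hci⟩
      cases hstep with
      | trans j t s hen => exact le_refl _
      | reset j s hen =>
        intro k
        by_cases hk : k = j
        · subst hk; simp [fireReset]
        · simp [fireReset, Function.update_of_ne hk]
      | time s hen =>
        exfalso
        simp only [tickState] at hci
        omega
    have hcyc4 := tg_restrict' (m := fun st : MState n (W × X) Loc => st.clock) hm3 hcyc3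
    -- every step of the resulting cycle is a transition firing
    have htrans : ∀ a b : MState n (W × X) Loc,
        ((((Step M a b ∧ (b.v).2 = (a.v).2) ∧
          ¬ (ResetEnabled M i0 a ∧ b = fireReset M i0 a)) ∧ b.clock i0 = a.clock i0) ∧
          b.clock = a.clock) →
        ∃ j t, TransEnabled M j t a ∧ b = fireTrans j t a := by
      rintro a b ⟨⟨⟨⟨hstep, -⟩, -⟩, hci⟩, hc⟩
      cases hstep with
      | trans j t s hen => exact ⟨j, t, hen, rfl⟩
      | reset j s hen =>
        exfalso
        have h0 : (fireReset M j a).clock j = a.clock j := congrFun hc j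
        have h1 : (0 : ℕ) = a.clock j := by simpa [fireReset] using h0
        have h2 := hen.2
        have h3 := M.period_pos j
        omega
      | time s hen =>
        exfalso
        simp only [tickState] at hci
        omega
    have hlocpath : ∀ (j : Fin n) (a b : MState n (W × X) Loc),
        Relation.ReflTransGen (fun x y =>
          (((Step M x y ∧ (y.v).2 = (x.v).2) ∧
            ¬ (ResetEnabled M i0 x ∧ y = fireReset M i0 x)) ∧ y.clock i0 = x.clock i0) ∧
            y.clock = x.clock) a b →
        ∃ p, AgentPath M j p (a.loc j) (b.loc j) := by
      intro j a b hab
      induction hab using Relation.ReflTransGen.head_induction_on with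
      | refl => exact ⟨[], rfl⟩
      | @head a' c hac hcb ih =>
        obtain ⟨k, t, hen, rfl⟩ := htrans _ _ hac
        obtain ⟨p, hp⟩ := ih
        by_cases hk : k = j
        · subst hk
          exact ⟨t :: p, hen.1, hen.2.1.symm, by simpa [fireTrans] using hp⟩
        · refine ⟨p, ?_⟩
          rwa [show (fireTrans k t a').loc j = a'.loc j from
            Function.update_of_ne (Ne.symm hk) _ _] at hp
    obtain ⟨c, hsc, hcs⟩ := Relation.TransGen.head'_iff.mp hcyc4
    obtain ⟨j, t, hen, rfl⟩ := htrans _ _ hsc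
    obtain ⟨p, hp⟩ := hlocpath j _ _ hcs
    refine hdag j (s.loc j) (t :: p) (by simp) ⟨hen.1, hen.2.1.symm, ?_⟩
    simpa [fireTrans] using hp
  · -- Case A : a reset of agent i0 occurs; rotate the cycle to start just after it
    have huu : Relation.ReflTransGen
        (fun x y => Step M x y ∧ (y.v).2 = (x.v).2) u' u := hus.trans hsu
    obtain ⟨p, hp, hns⟩ := hpath u' u huu hre.1
    have hloc' : u'.loc i0 = M.initLoc i0 := by
      rw [hrw]; simp [fireReset]
    rw [hloc'] at hp
    obtain ⟨t, htp, hstrict⟩ := hi0 p hp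
    exact hns t htp hstrict
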